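/- For every integer n ≥ 0 there exists an involution Ψ of the set M*_n such that: Ψ(μ)=μ if and only if μ∈G_n; for every μ∉G_n, ρ(Ψ(μ)) equals y²q·ρ(μ) or y^{−2}q^{−1}·ρ(μ); and for every μ∈M*_n, the exponent of t in ρ(Ψ(μ)) equals the exponent of t in ρ(μ). Moreover, for every μ∈G_n the exponent of t in ρ(μ) is congruent to n modulo 2. -/

import Mathlib

open Finset

/-- A step of a bicolored Motzkin path: up, down, straight level, wavy level. -/
inductive MStep where
  | U : MStep
  | D : MStep
  | L : MStep
  | W : MStep
deriving DecidableEq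

/-- A weighted bicolored Motzkin path of length `n`: a sequence of steps together
with, for each step, the triple `(a, b, c)` of exponents of its monomial weight
`y^a t^b q^c`. -/
structure WPath (n : ℕ) where
  step : Fin n → MStep
  wt : Fin n → ℕ × ℕ × ℕ

/-- The height increment of a step. -/
def dh : MStep → ℤ
  | MStep.U => 1
  | MStep.D => -1
  | MStep.L => 0
  | MStep.W => 0

/-- The height (of the starting point) of the `j`-th step; `ht μ n` is the final
height. -/
def ht {n : ℕ} (μ : WPath n) (j : ℕ) : ℤ :=
  ∑ k ∈ Finset.range j, if h : k < n then dh (μ.step ⟨k, h⟩) else 0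

/-- The underlying path is a Motzkin path: stays weakly above the `x`-axis and
ends on it. -/
def IsMotzkin {n : ℕ} (μ : WPath n) : Prop :=
  (∀ j ≤ n, 0 ≤ ht μ j) ∧ ht μ n = 0

/-- `y`, as the variable `X 0` of `ℤ[y,t,q]`. -/
noncomputable def yv : MvPolynomial (Fin 3) ℤ := MvPolynomial.X 0

/-- `t`, as the variable `X 1` of `ℤ[y,t,q]`. -/
noncomputable def tv : MvPolynomial (Fin 3) ℤ := MvPolynomial.X 1

/-- `q`, as the variable `X 2` of `ℤ[y,t,q]`. -/
noncomputable def qv : MvPolynomial (Fin 3) ℤ := MvPolynomial.X 2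

/-- The weight `ρ(μ) ∈ ℤ[y,t,q]`: the product of the step weights `y^a t^b q^c`. -/
noncomputable def rho {n : ℕ} (μ : WPath n) : MvPolynomial (Fin 3) ℤ :=
  ∏ j : Fin n, yv ^ (μ.wt j).1 * tv ^ (μ.wt j).2.1 * qv ^ (μ.wt j).2.2

/-- The exponent of `t` in the monomial `ρ(μ)`. -/
def tExp {n : ℕ} (μ : WPath n) : ℕ := ∑ j : Fin n, (μ.wt j).2.1

/-- The weight `w` is `y² q^c` with `lo ≤ c ≤ hi`. -/
def wY2 (w : ℕ × ℕ × ℕ) (lo hi : ℤ) : Prop :=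
  w.1 = 2 ∧ w.2.1 = 0 ∧ lo ≤ (w.2.2 : ℤ) ∧ (w.2.2 : ℤ) ≤ hi

/-- The weight `w` is `y t q^c` with `lo ≤ c ≤ hi`. -/
def wYT (w : ℕ × ℕ × ℕ) (lo hi : ℤ) : Prop :=
  w.1 = 1 ∧ w.2.1 = 1 ∧ lo ≤ (w.2.2 : ℤ) ∧ (w.2.2 : ℤ) ≤ hi

/-- The weight `w` is `q^c` with `lo ≤ c ≤ hi`. -/
def wQ (w : ℕ × ℕ × ℕ) (lo hi : ℤ) : Prop :=
  w.1 = 0 ∧ w.2.1 = 0 ∧ lo ≤ (w.2.2 : ℤ) ∧ (w.2.2 : ℤ) ≤ hi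

/-- `μ ∈ M_n`: no wavy level step on the `x`-axis, and at each step of height
`h`: up and straight level steps carry `y²q^c` (`c ≤ h`) or `ytq^c`
(`h ≤ c ≤ 2h`); wavy level steps (at height `h ≥ 1`) carry `q^c` (`c ≤ h-1`) or
`ytq^c` (`h ≤ c ≤ 2h-1`); down steps at height `h+1` carry `q^c` (`c ≤ h`) or
`ytq^c` (`h+1 ≤ c ≤ 2h+1`). -/
def Mcond {n : ℕ} (μ : WPath n) : Prop :=
  IsMotzkin μ ∧ ∀ j : Fin n,
    (μ.step j = MStep.U →
      wY2 (μ.wt j) 0 (ht μ j) ∨ wYT (μ.wt j) (ht μ j) (2 * ht μ j)) ∧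
    (μ.step j = MStep.L →
      wY2 (μ.wt j) 0 (ht μ j) ∨ wYT (μ.wt j) (ht μ j) (2 * ht μ j)) ∧
    (μ.step j = MStep.W →
      1 ≤ ht μ j ∧
        (wQ (μ.wt j) 0 (ht μ j - 1) ∨ wYT (μ.wt j) (ht μ j) (2 * ht μ j - 1))) ∧
    (μ.step j = MStep.D →
      wQ (μ.wt j) 0 (ht μ j - 1) ∨ wYT (μ.wt j) (ht μ j) (2 * ht μ j - 1))

/-- `μ ∈ H_n`: at each step of height `h`: up steps carry `y²q^c` (`c ≤ h+1`) or
`ytq^c` (`h+1 ≤ c ≤ 2h+2`); straight level steps carry `q^c` (`c ≤ h`) or `ytq^c`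
(`h+1 ≤ c ≤ 2h+1`); wavy level steps carry `y²q^c` (`c ≤ h`) or `ytq^c`
(`h ≤ c ≤ 2h`); down steps at height `h+1` carry `q^c` (`c ≤ h`) or `ytq^c`
(`h+1 ≤ c ≤ 2h+1`). -/
def Hcond {n : ℕ} (μ : WPath n) : Prop :=
  IsMotzkin μ ∧ ∀ j : Fin n,
    (μ.step j = MStep.U →
      wY2 (μ.wt j) 0 (ht μ j + 1) ∨ wYT (μ.wt j) (ht μ j + 1) (2 * ht μ j + 2)) ∧
    (μ.step j = MStep.L →
      wQ (μ.wt j) 0 (ht μ j) ∨ wYT (μ.wt j) (ht μ j + 1) (2 * ht μ j + 1)) ∧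
    (μ.step j = MStep.W →
      wY2 (μ.wt j) 0 (ht μ j) ∨ wYT (μ.wt j) (ht μ j) (2 * ht μ j)) ∧
    (μ.step j = MStep.D →
      wQ (μ.wt j) 0 (ht μ j - 1) ∨ wYT (μ.wt j) (ht μ j) (2 * ht μ j - 1))

/-- The up step `i` and the down step `j` form a matching pair: they face each
other, i.e. the horizontal segment between their midpoints stays under the path. -/
def Matching {n : ℕ} (μ : WPath n) (i j : Fin n) : Prop :=
  (i : ℕ) < (j : ℕ) ∧ μ.step i = MStep.U ∧ μ.step j = MStep.D ∧
    ht μ j = ht μ i + 1 ∧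
    ∀ k : ℕ, (i : ℕ) < k → k < (j : ℕ) → ht μ i + 1 ≤ ht μ k

/-- The defining restrictions of `G_n`: every matching pair at height `h` has
weights `(y²q^a, q^b)` with `a, b ≤ h`, or `(ytq^{h+a}, ytq^{h+1+b})` with
`a, b ≤ h`; every straight level step at height `h` has weight `ytq^c` with
`h ≤ c ≤ 2h`; every wavy level step (at height `h ≥ 1`) has weight `ytq^c` with
`h ≤ c ≤ 2h-1`. -/
def GextraCond {n : ℕ} (μ : WPath n) : Prop :=
  (∀ i j : Fin n, Matching μ i j →
    (wY2 (μ.wt i) 0 (ht μ i) ∧ wQ (μ.wt j) 0 (ht μ i)) ∨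
    (wYT (μ.wt i) (ht μ i) (2 * ht μ i) ∧
      wYT (μ.wt j) (ht μ i + 1) (2 * ht μ i + 1))) ∧
  (∀ j : Fin n, μ.step j = MStep.L →
    wYT (μ.wt j) (ht μ j) (2 * ht μ j)) ∧
  (∀ j : Fin n, μ.step j = MStep.W →
    1 ≤ ht μ j ∧ wYT (μ.wt j) (ht μ j) (2 * ht μ j - 1))

/-- `μ ∈ M*_n`: a path of `M_n` with no straight level step of weight `y²`. -/
def Mstar {n : ℕ} (μ : WPath n) : Prop :=
  Mcond μ ∧ ∀ j : Fin n, μ.step j = MStep.L → μ.wt j ≠ (2, 0, 0)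

section Aux
open scoped Classical

variable {n : ℕ}

theorem WPath.ext' {μ ν : WPath n} (hs : μ.step = ν.step) (hw : μ.wt = ν.wt) : μ = ν := by
  cases μ; cases ν; simp_all

lemma dh_bounds (s : MStep) : -1 ≤ dh s ∧ dh s ≤ 1 := by cases s <;> simp [dh]

lemma dh_eq_one {s : MStep} (h : dh s = 1) : s = MStep.U := by cases s <;> simp_all [dh]

lemma dh_eq_neg_one {s : MStep} (h : dh s = -1) : s = MStep.D := by cases s <;> simp_all [dh]

lemma ht_succ (μ : WPath n) {j : ℕ} (hj : j < n) :
    ht μ (j + 1) = ht μ j + dh (μ.step ⟨j, hj⟩) := by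
  simp [ht, Finset.sum_range_succ, dif_pos hj]

lemma ht_zero (μ : WPath n) : ht μ 0 = 0 := by simp [ht]

lemma ht_congr {μ ν : WPath n} (h : ∀ k : Fin n, dh (μ.step k) = dh (ν.step k)) (j : ℕ) :
    ht μ j = ht ν j := by
  unfold ht
  refine Finset.sum_congr rfl fun k _ => ?_
  by_cases hk : k < n
  · simp [dif_pos hk, h ⟨k, hk⟩]
  · simp [dif_neg hk]

/-- Every up step of a Motzkin path has a matching down step. -/
lemma exists_matching_right (μ : WPath n) (hM : IsMotzkin μ) (i : Fin n)
    (hU : μ.step i = MStep.U) : ∃ j : Fin n, Matching μ i j := by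
  classical
  have hin : (i : ℕ) < n := i.2
  have hex : ∃ m, (i : ℕ) < m ∧ m ≤ n ∧ ht μ m ≤ ht μ i :=
    ⟨n, hin, le_rfl, by rw [hM.2]; exact hM.1 i hin.le⟩
  obtain ⟨m, ⟨him, hmn, hhm⟩, hmin⟩ :
      ∃ m, ((i : ℕ) < m ∧ m ≤ n ∧ ht μ m ≤ ht μ i) ∧
        ∀ k < m, ¬((i : ℕ) < k ∧ k ≤ n ∧ ht μ k ≤ ht μ i) :=
    ⟨Nat.find hex, Nat.find_spec hex, fun k hk => Nat.find_min hex hk⟩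
  have hsucc : ht μ ((i : ℕ) + 1) = ht μ i + 1 := by
    rw [ht_succ μ hin]
    simp [Fin.eta, hU, dh]
  have hjmid : ∀ k, (i : ℕ) < k → k < m → ht μ i + 1 ≤ ht μ k := by
    intro k h1 h2
    by_contra h
    exact hmin k h2 ⟨h1, by omega, by omega⟩
  have hm2 : (i : ℕ) + 2 ≤ m := by
    have h1 : (i : ℕ) + 1 ≠ m := by
      intro h; rw [← h] at hhm; omega
    omega
  have hj_lt : m - 1 < n := by omega
  have hstep : ht μ (m - 1 + 1) = ht μ (m - 1) + dh (μ.step ⟨m - 1, hj_lt⟩) :=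
    ht_succ μ hj_lt
  have hmm : m - 1 + 1 = m := by omega
  rw [hmm] at hstep
  have hhj : ht μ i + 1 ≤ ht μ (m - 1) := hjmid (m - 1) (by omega) (by omega)
  have hd := dh_bounds (μ.step ⟨m - 1, hj_lt⟩)
  have hdm : dh (μ.step ⟨m - 1, hj_lt⟩) = -1 := by omega
  have hD : μ.step ⟨m - 1, hj_lt⟩ = MStep.D := dh_eq_neg_one hdm
  refine ⟨⟨m - 1, hj_lt⟩, ?_, hU, hD, ?_, ?_⟩
  · show (i : ℕ) < m - 1; omega
  · show ht μ (m - 1) = ht μ i + 1; omega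
  · intro k hk1 hk2
    have hk2' : k < m - 1 := hk2
    exact hjmid k hk1 (by omega)

/-- Every down step of a Motzkin path has a matching up step. -/
lemma exists_matching_left (μ : WPath n) (hM : IsMotzkin μ) (j : Fin n)
    (hD : μ.step j = MStep.D) : ∃ i : Fin n, Matching μ i j := by
  classical
  have hstep : ht μ ((j : ℕ) + 1) = ht μ j - 1 := by
    rw [ht_succ μ j.2]
    simp [Fin.eta, hD, dh]
    ring
  have hH1 : 1 ≤ ht μ j := by
    have := hM.1 ((j : ℕ) + 1) j.2
    omega
  have hP0 : ht μ 0 ≤ ht μ j - 1 := by rw [ht_zero]; omega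
  obtain hPi := Nat.findGreatest_spec (P := fun k => ht μ k ≤ ht μ j - 1)
    (Nat.zero_le (j : ℕ)) hP0
  set i := Nat.findGreatest (fun k => ht μ k ≤ ht μ j - 1) (j : ℕ) with hi
  have hmid : ∀ m, i < m → m ≤ (j : ℕ) → ht μ j ≤ ht μ m := by
    intro m h1 h2
    have := Nat.findGreatest_is_greatest (P := fun k => ht μ k ≤ ht μ j - 1) h1 h2
    omega
  have hij : i < (j : ℕ) := by
    have hile : i ≤ (j : ℕ) := Nat.findGreatest_le _
    rcases eq_or_lt_of_le hile with h | h
    · exfalso; rw [h] at hPi; omega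
    · exact h
  have hi_lt : i < n := lt_trans hij j.2
  have hstepi : ht μ (i + 1) = ht μ i + dh (μ.step ⟨i, hi_lt⟩) := ht_succ μ hi_lt
  have hd := dh_bounds (μ.step ⟨i, hi_lt⟩)
  have hi1 : ht μ j ≤ ht μ (i + 1) := hmid (i + 1) (by omega) (by omega)
  have hdm : dh (μ.step ⟨i, hi_lt⟩) = 1 := by omega
  have hU : μ.step ⟨i, hi_lt⟩ = MStep.U := dh_eq_one hdm
  have hhi : ht μ i = ht μ j - 1 := by omega
  refine ⟨⟨i, hi_lt⟩, hij, hU, hD, ?_, ?_⟩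
  · show ht μ j = ht μ i + 1; omega
  · intro k hk1 hk2
    have hk1' : i < k := hk1
    show ht μ i + 1 ≤ ht μ k
    have := hmid k hk1' (by omega)
    omega

lemma matching_unique_right {μ : WPath n} {i j j' : Fin n}
    (h1 : Matching μ i j) (h2 : Matching μ i j') : j = j' := by
  obtain ⟨hij, hU, hD, hh, hmid⟩ := h1
  obtain ⟨hij', hU', hD', hh', hmid'⟩ := h2
  have hs : ht μ ((j : ℕ) + 1) = ht μ i := by
    rw [ht_succ μ j.2]
    simp [Fin.eta, hD, dh]
    omega
  have hs' : ht μ ((j' : ℕ) + 1) = ht μ i := by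
    rw [ht_succ μ j'.2]
    simp [Fin.eta, hD', dh]
    omega
  by_contra hne
  have hne' : (j : ℕ) ≠ (j' : ℕ) := fun h => hne (Fin.ext h)
  rcases Nat.lt_or_ge (j : ℕ) (j' : ℕ) with h | h
  · rcases eq_or_lt_of_le (Nat.succ_le_of_lt h) with he | hl
    · have he' : (j : ℕ) + 1 = (j' : ℕ) := he
      rw [he'] at hs
      omega
    · have := hmid' ((j : ℕ) + 1) (by omega) hl
      omega
  · have h' : (j' : ℕ) < (j : ℕ) := by omega
    rcases eq_or_lt_of_le (Nat.succ_le_of_lt h') with he | hl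
    · have he' : (j' : ℕ) + 1 = (j : ℕ) := he
      rw [he'] at hs'
      omega
    · have := hmid ((j' : ℕ) + 1) (by omega) hl
      omega

lemma matching_unique_left {μ : WPath n} {i i' j : Fin n}
    (h1 : Matching μ i j) (h2 : Matching μ i' j) : i = i' := by
  obtain ⟨hij, hU, hD, hh, hmid⟩ := h1
  obtain ⟨hij', hU', hD', hh', hmid'⟩ := h2
  by_contra hne
  have hne' : (i : ℕ) ≠ (i' : ℕ) := fun h => hne (Fin.ext h)
  rcases Nat.lt_or_ge (i : ℕ) (i' : ℕ) with h | h
  · have := hmid (i' : ℕ) h hij'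
    omega
  · have := hmid' (i : ℕ) (by omega) hij
    omega

end Aux
section Aux2
open scoped Classical

variable {n : ℕ}

/-- The partner of an up step: the unique matching down step. -/
noncomputable def partner (μ : WPath n) (p : Fin n) : Fin n :=
  if h : ∃ k, Matching μ p k then h.choose else p

lemma partner_spec {μ : WPath n} {p : Fin n} (h : ∃ k, Matching μ p k) :
    Matching μ p (partner μ p) := by
  rw [partner, dif_pos h]; exact h.choose_spec

lemma partner_eq {μ : WPath n} {p k : Fin n} (h : Matching μ p k) : partner μ p = k :=
  matching_unique_right (partner_spec ⟨k, h⟩) h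

/-- A violation of the `G_n` conditions at position `p`. -/
def viol (μ : WPath n) (p : Fin n) : Prop :=
  (μ.step p = MStep.L ∧ (μ.wt p).2.1 = 0) ∨
  (μ.step p = MStep.W ∧ (μ.wt p).2.1 = 0) ∨
  (μ.step p = MStep.U ∧ ∃ k, Matching μ p k ∧ (μ.wt p).2.1 ≠ (μ.wt k).2.1)

/-- The local toggle at a violating position. -/
noncomputable def toggle (μ : WPath n) (p : Fin n) : WPath n :=
  if μ.step p = MStep.L then
    ⟨Function.update μ.step p MStep.W, Function.update μ.wt p (0, 0, (μ.wt p).2.2 - 1)⟩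
  else if μ.step p = MStep.W then
    ⟨Function.update μ.step p MStep.L, Function.update μ.wt p (2, 0, (μ.wt p).2.2 + 1)⟩
  else if μ.step p = MStep.U then
    if (μ.wt p).2.1 = 0 then
      ⟨μ.step, Function.update (Function.update μ.wt p
        (1, 1, (μ.wt p).2.2 + (ht μ p).toNat)) (partner μ p)
        (0, 0, (μ.wt (partner μ p)).2.2 - ((ht μ p).toNat + 1))⟩
    else
      ⟨μ.step, Function.update (Function.update μ.wt p
        (2, 0, (μ.wt p).2.2 - (ht μ p).toNat)) (partner μ p)
        (1, 1, (μ.wt (partner μ p)).2.2 + ((ht μ p).toNat + 1))⟩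
  else μ

lemma toggle_L {μ : WPath n} {p : Fin n} (hL : μ.step p = MStep.L) :
    toggle μ p = ⟨Function.update μ.step p MStep.W,
      Function.update μ.wt p (0, 0, (μ.wt p).2.2 - 1)⟩ := by
  rw [toggle, if_pos hL]

lemma toggle_W {μ : WPath n} {p : Fin n} (hW : μ.step p = MStep.W) :
    toggle μ p = ⟨Function.update μ.step p MStep.L,
      Function.update μ.wt p (2, 0, (μ.wt p).2.2 + 1)⟩ := by
  rw [toggle, if_neg (by simp [hW]), if_pos hW]

lemma toggle_U0 {μ : WPath n} {p : Fin n} (hU : μ.step p = MStep.U)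
    (h0 : (μ.wt p).2.1 = 0) :
    toggle μ p = ⟨μ.step, Function.update (Function.update μ.wt p
      (1, 1, (μ.wt p).2.2 + (ht μ p).toNat)) (partner μ p)
      (0, 0, (μ.wt (partner μ p)).2.2 - ((ht μ p).toNat + 1))⟩ := by
  rw [toggle, if_neg (by simp [hU]), if_neg (by simp [hU]), if_pos hU, if_pos h0]

lemma toggle_U1 {μ : WPath n} {p : Fin n} (hU : μ.step p = MStep.U)
    (h0 : (μ.wt p).2.1 ≠ 0) :
    toggle μ p = ⟨μ.step, Function.update (Function.update μ.wt p
      (2, 0, (μ.wt p).2.2 - (ht μ p).toNat)) (partner μ p)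
      (1, 1, (μ.wt (partner μ p)).2.2 + ((ht μ p).toNat + 1))⟩ := by
  rw [toggle, if_neg (by simp [hU]), if_neg (by simp [hU]), if_pos hU, if_neg h0]

lemma toggle_step_dh (μ : WPath n) (p x : Fin n) :
    dh ((toggle μ p).step x) = dh (μ.step x) := by
  unfold toggle
  rcases eq_or_ne x p with rfl | hx
  · split_ifs with h1 h2 h3 h4 <;> simp_all [Function.update_apply, dh]
  · split_ifs <;> simp [Function.update_apply, hx]

lemma ht_toggle (μ : WPath n) (p : Fin n) (j : ℕ) : ht (toggle μ p) j = ht μ j :=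
  ht_congr (fun k => toggle_step_dh μ p k) j

lemma toggle_step_U (μ : WPath n) (p x : Fin n) :
    ((toggle μ p).step x = MStep.U) ↔ (μ.step x = MStep.U) := by
  unfold toggle
  rcases eq_or_ne x p with rfl | hx
  · split_ifs with h1 h2 h3 h4 <;> simp_all [Function.update_apply]
  · split_ifs <;> simp [Function.update_apply, hx]

lemma toggle_step_D (μ : WPath n) (p x : Fin n) :
    ((toggle μ p).step x = MStep.D) ↔ (μ.step x = MStep.D) := by
  unfold toggle
  rcases eq_or_ne x p with rfl | hx
  · split_ifs with h1 h2 h3 h4 <;> simp_all [Function.update_apply]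
  · split_ifs <;> simp [Function.update_apply, hx]

lemma matching_toggle (μ : WPath n) (p i j : Fin n) :
    Matching (toggle μ p) i j ↔ Matching μ i j := by
  unfold Matching
  simp only [toggle_step_U, toggle_step_D, ht_toggle]

lemma isMotzkin_toggle {μ : WPath n} (hM : IsMotzkin μ) (p : Fin n) :
    IsMotzkin (toggle μ p) :=
  ⟨fun j hj => by rw [ht_toggle]; exact hM.1 j hj, by rw [ht_toggle]; exact hM.2⟩

/-- The per-step weight condition of `M_n`, on abstract data. -/
def SC (s : MStep) (w : ℕ × ℕ × ℕ) (h : ℤ) : Prop :=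
  (s = MStep.U → wY2 w 0 h ∨ wYT w h (2 * h)) ∧
  (s = MStep.L → wY2 w 0 h ∨ wYT w h (2 * h)) ∧
  (s = MStep.W → 1 ≤ h ∧ (wQ w 0 (h - 1) ∨ wYT w h (2 * h - 1))) ∧
  (s = MStep.D → wQ w 0 (h - 1) ∨ wYT w h (2 * h - 1))

lemma Mcond_iff (μ : WPath n) :
    Mcond μ ↔ IsMotzkin μ ∧ ∀ j : Fin n, SC (μ.step j) (μ.wt j) (ht μ j) :=
  Iff.rfl

end Aux2
section Aux3
open scoped Classical

variable {n : ℕ}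

lemma wt_eq2 {w : ℕ × ℕ × ℕ} {a b : ℕ} (h1 : w.1 = a) (h2 : w.2.1 = b) :
    w = (a, b, w.2.2) := by
  obtain ⟨x, y, z⟩ := w; simp_all

lemma ht_nonneg {μ : WPath n} (hM : IsMotzkin μ) (p : Fin n) : 0 ≤ ht μ p :=
  hM.1 p p.2.le

lemma SC_U {w : ℕ × ℕ × ℕ} {h : ℤ} (hw : wY2 w 0 h ∨ wYT w h (2 * h)) :
    SC MStep.U w h :=
  ⟨fun _ => hw, fun hc => MStep.noConfusion hc, fun hc => MStep.noConfusion hc,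
    fun hc => MStep.noConfusion hc⟩

lemma SC_D {w : ℕ × ℕ × ℕ} {h : ℤ} (hw : wQ w 0 (h - 1) ∨ wYT w h (2 * h - 1)) :
    SC MStep.D w h :=
  ⟨fun hc => MStep.noConfusion hc, fun hc => MStep.noConfusion hc,
    fun hc => MStep.noConfusion hc, fun _ => hw⟩

lemma SC_L {w : ℕ × ℕ × ℕ} {h : ℤ} (hw : wY2 w 0 h ∨ wYT w h (2 * h)) :
    SC MStep.L w h :=
  ⟨fun hc => MStep.noConfusion hc, fun _ => hw, fun hc => MStep.noConfusion hc,
    fun hc => MStep.noConfusion hc⟩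

lemma SC_W {w : ℕ × ℕ × ℕ} {h : ℤ} (h1 : 1 ≤ h)
    (hw : wQ w 0 (h - 1) ∨ wYT w h (2 * h - 1)) : SC MStep.W w h :=
  ⟨fun hc => MStep.noConfusion hc, fun hc => MStep.noConfusion hc,
    fun _ => ⟨h1, hw⟩, fun hc => MStep.noConfusion hc⟩

lemma violL_facts {μ : WPath n} {p : Fin n} (hMs : Mstar μ) (hL : μ.step p = MStep.L)
    (h0 : (μ.wt p).2.1 = 0) :
    μ.wt p = (2, 0, (μ.wt p).2.2) ∧ 1 ≤ (μ.wt p).2.2 ∧ ((μ.wt p).2.2 : ℤ) ≤ ht μ p := by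
  rcases (hMs.1.2 p).2.1 hL with h | h
  · obtain ⟨h1, h2, h3, h4⟩ := h
    have hwt := wt_eq2 h1 h2
    refine ⟨hwt, ?_, h4⟩
    by_contra hc
    have hc0 : (μ.wt p).2.2 = 0 := by omega
    exact hMs.2 p hL (by rw [hwt, hc0])
  · exact absurd h.2.1 (by rw [h0]; decide)

lemma violW_facts {μ : WPath n} {p : Fin n} (hMs : Mstar μ) (hW : μ.step p = MStep.W)
    (h0 : (μ.wt p).2.1 = 0) :
    μ.wt p = (0, 0, (μ.wt p).2.2) ∧ ((μ.wt p).2.2 : ℤ) ≤ ht μ p - 1 ∧ 1 ≤ ht μ p := by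
  obtain ⟨hh1, h⟩ := (hMs.1.2 p).2.2.1 hW
  rcases h with h | h
  · exact ⟨wt_eq2 h.1 h.2.1, h.2.2.2, hh1⟩
  · exact absurd h.2.1 (by rw [h0]; decide)

lemma violU_facts {μ : WPath n} {p k : Fin n} (hMs : Mstar μ) (hU : μ.step p = MStep.U)
    (hm : Matching μ p k) (hne : (μ.wt p).2.1 ≠ (μ.wt k).2.1) :
    (μ.wt p = (2, 0, (μ.wt p).2.2) ∧ ((μ.wt p).2.2 : ℤ) ≤ ht μ p ∧
      μ.wt k = (1, 1, (μ.wt k).2.2) ∧ ht μ p + 1 ≤ ((μ.wt k).2.2 : ℤ) ∧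
      ((μ.wt k).2.2 : ℤ) ≤ 2 * ht μ p + 1) ∨
    (μ.wt p = (1, 1, (μ.wt p).2.2) ∧ ht μ p ≤ ((μ.wt p).2.2 : ℤ) ∧
      ((μ.wt p).2.2 : ℤ) ≤ 2 * ht μ p ∧
      μ.wt k = (0, 0, (μ.wt k).2.2) ∧ ((μ.wt k).2.2 : ℤ) ≤ ht μ p) := by
  have hD : μ.step k = MStep.D := hm.2.2.1
  have hhk : ht μ k = ht μ p + 1 := hm.2.2.2.1
  have hp := (hMs.1.2 p).1 hU
  have hk := (hMs.1.2 k).2.2.2 hD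
  rcases hp with hp | hp
  · left
    rcases hk with hk | hk
    · exact absurd (hp.2.1.trans hk.2.1.symm) hne
    · obtain ⟨k1, k2, k3, k4⟩ := hk
      rw [hhk] at k3 k4
      exact ⟨wt_eq2 hp.1 hp.2.1, hp.2.2.2, wt_eq2 k1 k2, by omega, by omega⟩
  · right
    rcases hk with hk | hk
    · obtain ⟨k1, k2, k3, k4⟩ := hk
      rw [hhk] at k4
      exact ⟨wt_eq2 hp.1 hp.2.1, hp.2.2.1, hp.2.2.2, wt_eq2 k1 k2, by omega⟩
    · exact absurd (hp.2.1.trans hk.2.1.symm) hne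

lemma hpk_of_matching {μ : WPath n} {p k : Fin n} (hm : Matching μ p k) : p ≠ k :=
  fun h => absurd hm.1 (by rw [h]; exact lt_irrefl _)

lemma toNat_ht {μ : WPath n} (hM : IsMotzkin μ) (p : Fin n) :
    ((ht μ p).toNat : ℤ) = ht μ p :=
  Int.toNat_of_nonneg (ht_nonneg hM p)

end Aux3
section Aux4
open scoped Classical

variable {n : ℕ}

lemma toggle_L_pt {μ : WPath n} {p : Fin n} (hL : μ.step p = MStep.L) :
    (toggle μ p).step p = MStep.W ∧ (toggle μ p).wt p = (0, 0, (μ.wt p).2.2 - 1) ∧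
      ∀ x : Fin n, x ≠ p → (toggle μ p).step x = μ.step x ∧ (toggle μ p).wt x = μ.wt x := by
  rw [toggle_L hL]
  exact ⟨by simp, by simp, fun x hx =>
    ⟨by simp [Function.update_apply, hx], by simp [Function.update_apply, hx]⟩⟩

lemma toggle_W_pt {μ : WPath n} {p : Fin n} (hW : μ.step p = MStep.W) :
    (toggle μ p).step p = MStep.L ∧ (toggle μ p).wt p = (2, 0, (μ.wt p).2.2 + 1) ∧
      ∀ x : Fin n, x ≠ p → (toggle μ p).step x = μ.step x ∧ (toggle μ p).wt x = μ.wt x := by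
  rw [toggle_W hW]
  exact ⟨by simp, by simp, fun x hx =>
    ⟨by simp [Function.update_apply, hx], by simp [Function.update_apply, hx]⟩⟩

lemma toggle_U0_pt {μ : WPath n} {p k : Fin n} (hU : μ.step p = MStep.U)
    (h0 : (μ.wt p).2.1 = 0) (hm : Matching μ p k) :
    (toggle μ p).step = μ.step ∧
      (toggle μ p).wt p = (1, 1, (μ.wt p).2.2 + (ht μ p).toNat) ∧
      (toggle μ p).wt k = (0, 0, (μ.wt k).2.2 - ((ht μ p).toNat + 1)) ∧
      ∀ x : Fin n, x ≠ p → x ≠ k → (toggle μ p).wt x = μ.wt x := by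
  have hpk := hpk_of_matching hm
  rw [toggle_U0 hU h0, partner_eq hm]
  exact ⟨rfl, by simp [Function.update_apply, hpk], by simp,
    fun x hxp hxk => by simp [Function.update_apply, hxp, hxk]⟩

lemma toggle_U1_pt {μ : WPath n} {p k : Fin n} (hU : μ.step p = MStep.U)
    (h0 : (μ.wt p).2.1 ≠ 0) (hm : Matching μ p k) :
    (toggle μ p).step = μ.step ∧
      (toggle μ p).wt p = (2, 0, (μ.wt p).2.2 - (ht μ p).toNat) ∧
      (toggle μ p).wt k = (1, 1, (μ.wt k).2.2 + ((ht μ p).toNat + 1)) ∧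
      ∀ x : Fin n, x ≠ p → x ≠ k → (toggle μ p).wt x = μ.wt x := by
  have hpk := hpk_of_matching hm
  rw [toggle_U1 hU h0, partner_eq hm]
  exact ⟨rfl, by simp [Function.update_apply, hpk], by simp,
    fun x hxp hxk => by simp [Function.update_apply, hxp, hxk]⟩

lemma toggle_ne {μ : WPath n} {p : Fin n} (hMs : Mstar μ) (hv : viol μ p) :
    toggle μ p ≠ μ := by
  intro hEq
  rcases hv with ⟨hL, h0⟩ | ⟨hW, h0⟩ | ⟨hU, k, hm, hne⟩
  · have h1 := congrArg (fun ν : WPath n => (ν.wt p).1) hEq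
    have h2 := (violL_facts hMs hL h0).1
    rw [(toggle_L_pt hL).2.1] at h1
    rw [h2] at h1
    simp at h1
  · have h1 := congrArg (fun ν : WPath n => (ν.wt p).1) hEq
    have h2 := (violW_facts hMs hW h0).1
    rw [(toggle_W_pt hW).2.1] at h1
    rw [h2] at h1
    simp at h1
  · have h1 := congrArg (fun ν : WPath n => (ν.wt p).2.1) hEq
    by_cases h0 : (μ.wt p).2.1 = 0
    · rw [(toggle_U0_pt hU h0 hm).2.1] at h1
      simp [h0] at h1
    · rw [(toggle_U1_pt hU h0 hm).2.1] at h1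
      simp at h1
      exact h0 h1.symm
end Aux4
section Aux5
open scoped Classical

variable {n : ℕ}

lemma mstar_toggle {μ : WPath n} {p : Fin n} (hMs : Mstar μ) (hv : viol μ p) :
    Mstar (toggle μ p) := by
  have hIM := isMotzkin_toggle hMs.1.1 p
  rcases hv with ⟨hL, h0⟩ | ⟨hW, h0⟩ | ⟨hU, k, hm, hne⟩
  · obtain ⟨hsp, hwp, hother⟩ := toggle_L_pt hL
    obtain ⟨hwt, hc1, hc2⟩ := violL_facts hMs hL h0
    refine ⟨⟨hIM, fun x => ?_⟩, fun x hLx => ?_⟩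
    · show SC ((toggle μ p).step x) ((toggle μ p).wt x) (ht (toggle μ p) x)
      rw [ht_toggle]
      by_cases hx : x = p
      · subst hx
        rw [hsp, hwp]
        exact SC_W (by omega) (Or.inl ⟨rfl, rfl, by dsimp only; omega, by dsimp only; omega⟩)
      · rw [(hother x hx).1, (hother x hx).2]
        exact hMs.1.2 x
    · by_cases hx : x = p
      · subst hx; rw [hsp] at hLx; exact MStep.noConfusion hLx
      · rw [(hother x hx).2]
        exact hMs.2 x (by rw [← (hother x hx).1]; exact hLx)
  · obtain ⟨hsp, hwp, hother⟩ := toggle_W_pt hW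
    obtain ⟨hwt, hc2, hc1⟩ := violW_facts hMs hW h0
    refine ⟨⟨hIM, fun x => ?_⟩, fun x hLx => ?_⟩
    · show SC ((toggle μ p).step x) ((toggle μ p).wt x) (ht (toggle μ p) x)
      rw [ht_toggle]
      by_cases hx : x = p
      · subst hx
        rw [hsp, hwp]
        exact SC_L (Or.inl ⟨rfl, rfl, by dsimp only; omega, by dsimp only; omega⟩)
      · rw [(hother x hx).1, (hother x hx).2]
        exact hMs.1.2 x
    · by_cases hx : x = p
      · subst hx; rw [hwp]; simp
      · rw [(hother x hx).2]
        exact hMs.2 x (by rw [← (hother x hx).1]; exact hLx)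
  · have hD : μ.step k = MStep.D := hm.2.2.1
    have hhk : ht μ k = ht μ p + 1 := hm.2.2.2.1
    have hpk := hpk_of_matching hm
    have hNc := toNat_ht hMs.1.1 p
    have hf := violU_facts hMs hU hm hne
    by_cases h0 : (μ.wt p).2.1 = 0
    · obtain ⟨hsp, hwp, hwk, hother⟩ := toggle_U0_pt hU h0 hm
      rcases hf with ⟨hwtp, hcp, hwtk, hck1, hck2⟩ | ⟨hwtp, _⟩
      swap
      · rw [hwtp] at h0; simp at h0
      refine ⟨⟨hIM, fun x => ?_⟩, fun x hLx => ?_⟩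
      · show SC ((toggle μ p).step x) ((toggle μ p).wt x) (ht (toggle μ p) x)
        rw [ht_toggle, hsp]
        by_cases hx : x = p
        · subst hx
          rw [hwp, hU]
          exact SC_U (Or.inr ⟨rfl, rfl, by dsimp only; omega, by dsimp only; omega⟩)
        · by_cases hxk : x = k
          · subst hxk
            rw [hwk, hD]
            exact SC_D (Or.inl ⟨rfl, rfl, by dsimp only; omega, by dsimp only; omega⟩)
          · rw [hother x hx hxk]
            exact hMs.1.2 x
      · rw [hsp] at hLx
        have hxp : x ≠ p := fun h => by rw [h, hU] at hLx; exact MStep.noConfusion hLx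
        have hxk : x ≠ k := fun h => by rw [h, hD] at hLx; exact MStep.noConfusion hLx
        rw [hother x hxp hxk]
        exact hMs.2 x hLx
    · obtain ⟨hsp, hwp, hwk, hother⟩ := toggle_U1_pt hU h0 hm
      rcases hf with ⟨hwtp, _⟩ | ⟨hwtp, hcp1, hcp2, hwtk, hck⟩
      · rw [hwtp] at h0; simp at h0
      refine ⟨⟨hIM, fun x => ?_⟩, fun x hLx => ?_⟩
      · show SC ((toggle μ p).step x) ((toggle μ p).wt x) (ht (toggle μ p) x)
        rw [ht_toggle, hsp]
        by_cases hx : x = p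
        · subst hx
          rw [hwp, hU]
          exact SC_U (Or.inl ⟨rfl, rfl, by dsimp only; omega, by dsimp only; omega⟩)
        · by_cases hxk : x = k
          · subst hxk
            rw [hwk, hD]
            exact SC_D (Or.inr ⟨rfl, rfl, by dsimp only; omega, by dsimp only; omega⟩)
          · rw [hother x hx hxk]
            exact hMs.1.2 x
      · rw [hsp] at hLx
        have hxp : x ≠ p := fun h => by rw [h, hU] at hLx; exact MStep.noConfusion hLx
        have hxk : x ≠ k := fun h => by rw [h, hD] at hLx; exact MStep.noConfusion hLx
        rw [hother x hxp hxk]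
        exact hMs.2 x hLx

end Aux5
section Aux6
open scoped Classical

variable {n : ℕ}

lemma not_viol_of_D {μ : WPath n} {x : Fin n} (hD : μ.step x = MStep.D) : ¬viol μ x := by
  rintro (⟨h, -⟩ | ⟨h, -⟩ | ⟨h, -⟩) <;> rw [hD] at h <;> exact MStep.noConfusion h

lemma viol_congr {μ : WPath n} {p x : Fin n}
    (hs : (toggle μ p).step x = μ.step x) (hw : (toggle μ p).wt x = μ.wt x)
    (hwk : ∀ k : Fin n, Matching μ x k → (toggle μ p).wt k = μ.wt k) :
    viol (toggle μ p) x ↔ viol μ x := by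
  unfold viol
  rw [hs, hw]
  constructor
  · rintro (h | h | ⟨hU, k, hk, hne⟩)
    · exact Or.inl h
    · exact Or.inr (Or.inl h)
    · have hk' := (matching_toggle μ p x k).mp hk
      exact Or.inr (Or.inr ⟨hU, k, hk', by rwa [hwk k hk'] at hne⟩)
  · rintro (h | h | ⟨hU, k, hk, hne⟩)
    · exact Or.inl h
    · exact Or.inr (Or.inl h)
    · exact Or.inr (Or.inr ⟨hU, k, (matching_toggle μ p x k).mpr hk,
        by rwa [hwk k hk]⟩)

lemma viol_toggle {μ : WPath n} {p : Fin n} (hMs : Mstar μ) (hv : viol μ p) (x : Fin n) :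
    viol (toggle μ p) x ↔ viol μ x := by
  rcases hv with ⟨hL, h0⟩ | ⟨hW, h0⟩ | ⟨hU, k, hm, hne⟩
  · obtain ⟨hsp, hwp, hother⟩ := toggle_L_pt hL
    by_cases hx : x = p
    · subst hx
      exact iff_of_true (Or.inr (Or.inl ⟨hsp, by simp [hwp]⟩)) (Or.inl ⟨hL, h0⟩)
    · refine viol_congr (hother x hx).1 (hother x hx).2 fun k hk => ?_
      have hkD := hk.2.2.1
      have hkp : k ≠ p := fun h => by rw [h, hL] at hkD; exact MStep.noConfusion hkD
      exact (hother k hkp).2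
  · obtain ⟨hsp, hwp, hother⟩ := toggle_W_pt hW
    by_cases hx : x = p
    · subst hx
      exact iff_of_true (Or.inl ⟨hsp, by simp [hwp]⟩) (Or.inr (Or.inl ⟨hW, h0⟩))
    · refine viol_congr (hother x hx).1 (hother x hx).2 fun k hk => ?_
      have hkD := hk.2.2.1
      have hkp : k ≠ p := fun h => by rw [h, hW] at hkD; exact MStep.noConfusion hkD
      exact (hother k hkp).2
  · have hD : μ.step k = MStep.D := hm.2.2.1
    have hpk := hpk_of_matching hm
    by_cases h0 : (μ.wt p).2.1 = 0
    · obtain ⟨hsp, hwp, hwk, hother⟩ := toggle_U0_pt hU h0 hm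
      by_cases hx : x = p
      · subst hx
        refine iff_of_true ?_ (Or.inr (Or.inr ⟨hU, k, hm, hne⟩))
        refine Or.inr (Or.inr ⟨(congrFun hsp x).trans hU, k,
          (matching_toggle μ x x k).mpr hm, ?_⟩)
        rw [hwp, hwk]
        simp
      · by_cases hxk : x = k
        · subst hxk
          exact iff_of_false (not_viol_of_D ((congrFun hsp x).trans hD)) (not_viol_of_D hD)
        · refine viol_congr (congrFun hsp x) (hother x hx hxk) fun k' hk' => ?_
          have hk'D := hk'.2.2.1
          have hk'p : k' ≠ p := fun h => by rw [h, hU] at hk'D; exact MStep.noConfusion hk'D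
          have hk'k : k' ≠ k := fun h => hx (matching_unique_left (h ▸ hk') hm)
          exact hother k' hk'p hk'k
    · obtain ⟨hsp, hwp, hwk, hother⟩ := toggle_U1_pt hU h0 hm
      by_cases hx : x = p
      · subst hx
        refine iff_of_true ?_ (Or.inr (Or.inr ⟨hU, k, hm, hne⟩))
        refine Or.inr (Or.inr ⟨(congrFun hsp x).trans hU, k,
          (matching_toggle μ x x k).mpr hm, ?_⟩)
        rw [hwp, hwk]
        simp
      · by_cases hxk : x = k
        · subst hxk
          exact iff_of_false (not_viol_of_D ((congrFun hsp x).trans hD)) (not_viol_of_D hD)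
        · refine viol_congr (congrFun hsp x) (hother x hx hxk) fun k' hk' => ?_
          have hk'D := hk'.2.2.1
          have hk'p : k' ≠ p := fun h => by rw [h, hU] at hk'D; exact MStep.noConfusion hk'D
          have hk'k : k' ≠ k := fun h => hx (matching_unique_left (h ▸ hk') hm)
          exact hother k' hk'p hk'k

lemma toggle_toggle {μ : WPath n} {p : Fin n} (hMs : Mstar μ) (hv : viol μ p) :
    toggle (toggle μ p) p = μ := by
  rcases hv with ⟨hL, h0⟩ | ⟨hW, h0⟩ | ⟨hU, k, hm, hne⟩
  · obtain ⟨hsp, hwp, hother⟩ := toggle_L_pt hL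
    obtain ⟨hwt, hc1, hc2⟩ := violL_facts hMs hL h0
    obtain ⟨hsp2, hwp2, hother2⟩ := toggle_W_pt hsp
    apply WPath.ext'
    · funext x
      by_cases hx : x = p
      · subst hx; rw [hsp2, hL]
      · rw [(hother2 x hx).1, (hother x hx).1]
    · funext x
      by_cases hx : x = p
      · subst hx
        rw [hwp2, hwp]
        dsimp only
        rw [Nat.sub_add_cancel hc1]
        exact hwt.symm
      · rw [(hother2 x hx).2, (hother x hx).2]
  · obtain ⟨hsp, hwp, hother⟩ := toggle_W_pt hW
    obtain ⟨hwt, hc2, hc1⟩ := violW_facts hMs hW h0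
    obtain ⟨hsp2, hwp2, hother2⟩ := toggle_L_pt hsp
    apply WPath.ext'
    · funext x
      by_cases hx : x = p
      · subst hx; rw [hsp2, hW]
      · rw [(hother2 x hx).1, (hother x hx).1]
    · funext x
      by_cases hx : x = p
      · subst hx
        rw [hwp2, hwp]
        dsimp only
        rw [Nat.add_sub_cancel]
        exact hwt.symm
      · rw [(hother2 x hx).2, (hother x hx).2]
  · have hD : μ.step k = MStep.D := hm.2.2.1
    have hhk : ht μ k = ht μ p + 1 := hm.2.2.2.1
    have hpk := hpk_of_matching hm
    have hNc := toNat_ht hMs.1.1 p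
    have hm' : Matching (toggle μ p) p k := (matching_toggle μ p p k).mpr hm
    by_cases h0 : (μ.wt p).2.1 = 0
    · obtain ⟨hsp, hwp, hwk, hother⟩ := toggle_U0_pt hU h0 hm
      rcases violU_facts hMs hU hm hne with ⟨hwtp, hcp, hwtk, hck1, hck2⟩ | ⟨hwtp, -⟩
      swap
      · rw [hwtp] at h0; simp at h0
      have hU' : (toggle μ p).step p = MStep.U := (congrFun hsp p).trans hU
      have h0' : ((toggle μ p).wt p).2.1 ≠ 0 := by rw [hwp]; simp
      obtain ⟨hsp2, hwp2, hwk2, hother2⟩ := toggle_U1_pt hU' h0' hm'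
      have hckN : (ht μ p).toNat + 1 ≤ (μ.wt k).2.2 := by omega
      apply WPath.ext'
      · rw [hsp2, hsp]
      · funext x
        by_cases hx : x = p
        · subst hx
          rw [hwp2, hwp, ht_toggle]
          dsimp only
          rw [Nat.add_sub_cancel]
          exact hwtp.symm
        · by_cases hxk : x = k
          · subst hxk
            rw [hwk2, hwk, ht_toggle]
            dsimp only
            rw [Nat.sub_add_cancel hckN]
            exact hwtk.symm
          · rw [hother2 x hx hxk, hother x hx hxk]
    · obtain ⟨hsp, hwp, hwk, hother⟩ := toggle_U1_pt hU h0 hm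
      rcases violU_facts hMs hU hm hne with ⟨hwtp, -⟩ | ⟨hwtp, hcp1, hcp2, hwtk, hck⟩
      · rw [hwtp] at h0; simp at h0
      have hU' : (toggle μ p).step p = MStep.U := (congrFun hsp p).trans hU
      have h0' : ((toggle μ p).wt p).2.1 = 0 := by rw [hwp]
      obtain ⟨hsp2, hwp2, hwk2, hother2⟩ := toggle_U0_pt hU' h0' hm'
      have hcpN : (ht μ p).toNat ≤ (μ.wt p).2.2 := by omega
      apply WPath.ext'
      · rw [hsp2, hsp]
      · funext x
        by_cases hx : x = p
        · subst hx
          rw [hwp2, hwp, ht_toggle]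
          dsimp only
          rw [Nat.sub_add_cancel hcpN]
          exact hwtp.symm
        · by_cases hxk : x = k
          · subst hxk
            rw [hwk2, hwk, ht_toggle]
            dsimp only
            rw [Nat.add_sub_cancel]
            exact hwtk.symm
          · rw [hother2 x hx hxk, hother x hx hxk]

end Aux6
section Aux7
open scoped Classical

variable {n : ℕ}

noncomputable def term (w : ℕ × ℕ × ℕ) : MvPolynomial (Fin 3) ℤ :=
  yv ^ w.1 * tv ^ w.2.1 * qv ^ w.2.2

lemma rho_def (μ : WPath n) : rho μ = ∏ j, term (μ.wt j) := rfl

lemma tExp_def (μ : WPath n) : tExp μ = ∑ j, (μ.wt j).2.1 := rfl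

lemma comp_update {α M : Type*} [DecidableEq α] (w : α → ℕ × ℕ × ℕ) (p : α)
    (v : ℕ × ℕ × ℕ) (g : ℕ × ℕ × ℕ → M) :
    (fun j => g (Function.update w p v j)) = Function.update (fun j => g (w j)) p (g v) := by
  funext j
  rcases eq_or_ne j p with rfl | h
  · simp
  · simp [Function.update_apply, h]

lemma prod_comp_update {M : Type*} [CommMonoid M] (s : Finset (Fin n)) {p : Fin n}
    (hp : p ∈ s) (w : Fin n → ℕ × ℕ × ℕ) (v : ℕ × ℕ × ℕ) (g : ℕ × ℕ × ℕ → M) :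
    ∏ j ∈ s, g (Function.update w p v j) = g v * ∏ j ∈ s \ {p}, g (w j) := by
  calc ∏ j ∈ s, g (Function.update w p v j)
      = ∏ j ∈ s, Function.update (fun j => g (w j)) p (g v) j := by rw [← comp_update]
    _ = g v * ∏ j ∈ s \ {p}, g (w j) := Finset.prod_update_of_mem hp _ _

lemma sum_comp_update (s : Finset (Fin n)) {p : Fin n}
    (hp : p ∈ s) (w : Fin n → ℕ × ℕ × ℕ) (v : ℕ × ℕ × ℕ) (g : ℕ × ℕ × ℕ → ℕ) :
    ∑ j ∈ s, g (Function.update w p v j) = g v + ∑ j ∈ s \ {p}, g (w j) := by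
  calc ∑ j ∈ s, g (Function.update w p v j)
      = ∑ j ∈ s, Function.update (fun j => g (w j)) p (g v) j := by rw [← comp_update]
    _ = g v + ∑ j ∈ s \ {p}, g (w j) := Finset.sum_update_of_mem hp _ _

lemma prod_split {M : Type*} [CommMonoid M] (s : Finset (Fin n)) {p : Fin n}
    (hp : p ∈ s) (w : Fin n → ℕ × ℕ × ℕ) (g : ℕ × ℕ × ℕ → M) :
    ∏ j ∈ s, g (w j) = g (w p) * ∏ j ∈ s \ {p}, g (w j) := by
  rw [Finset.prod_eq_prod_diff_singleton_mul hp]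
  exact mul_comm _ _

lemma sum_split (s : Finset (Fin n)) {p : Fin n}
    (hp : p ∈ s) (w : Fin n → ℕ × ℕ × ℕ) (g : ℕ × ℕ × ℕ → ℕ) :
    ∑ j ∈ s, g (w j) = g (w p) + ∑ j ∈ s \ {p}, g (w j) := by
  rw [Finset.sum_eq_sum_sdiff_singleton_add hp]
  ring

lemma rho_toggle {μ : WPath n} {p : Fin n} (hMs : Mstar μ) (hv : viol μ p) :
    rho (toggle μ p) = yv ^ 2 * qv * rho μ ∨ yv ^ 2 * qv * rho (toggle μ p) = rho μ := by
  rcases hv with ⟨hL, h0⟩ | ⟨hW, h0⟩ | ⟨hU, k, hm, hne⟩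
  · -- straight level y²q^c ↦ wavy q^(c-1) : divides by y²q
    right
    obtain ⟨hwt, hc1, hc2⟩ := violL_facts hMs hL h0
    have hw := congrArg WPath.wt (toggle_L hL)
    rw [rho_def, rho_def, hw, prod_comp_update Finset.univ (Finset.mem_univ p),
      prod_split Finset.univ (Finset.mem_univ p) μ.wt term, hwt]
    obtain ⟨d, hd⟩ : ∃ d, (μ.wt p).2.2 = d + 1 := ⟨(μ.wt p).2.2 - 1, by omega⟩
    rw [hd]
    have key : yv ^ 2 * qv * term (0, 0, d + 1 - 1) = term (2, 0, d + 1) := by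
      simp only [term, Nat.add_sub_cancel]
      ring
    set P := ∏ j ∈ Finset.univ \ {p}, term (μ.wt j)
    linear_combination P * key
  · left
    obtain ⟨hwt, hc2, hc1⟩ := violW_facts hMs hW h0
    have hw := congrArg WPath.wt (toggle_W hW)
    rw [rho_def, rho_def, hw, prod_comp_update Finset.univ (Finset.mem_univ p),
      prod_split Finset.univ (Finset.mem_univ p) μ.wt term, hwt]
    have key : term (2, 0, (μ.wt p).2.2 + 1) = yv ^ 2 * qv * term (0, 0, (μ.wt p).2.2) := by
      simp only [term]
      ring
    set P := ∏ j ∈ Finset.univ \ {p}, term (μ.wt j)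
    linear_combination P * key
  · have hD : μ.step k = MStep.D := hm.2.2.1
    have hhk : ht μ k = ht μ p + 1 := hm.2.2.2.1
    have hpk := hpk_of_matching hm
    have hNc := toNat_ht hMs.1.1 p
    have hpk' : p ∈ Finset.univ \ ({k} : Finset (Fin n)) := by
      simp [Finset.mem_sdiff, hpk]
    by_cases h0 : (μ.wt p).2.1 = 0
    · right
      rcases violU_facts hMs hU hm hne with ⟨hwtp, hcp, hwtk, hck1, hck2⟩ | ⟨hwtp, -⟩
      swap
      · rw [hwtp] at h0; simp at h0
      have hw := congrArg WPath.wt (toggle_U0 hU h0)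
      rw [partner_eq hm] at hw
      rw [rho_def, rho_def, hw, prod_comp_update Finset.univ (Finset.mem_univ k),
        prod_comp_update _ hpk',
        prod_split Finset.univ (Finset.mem_univ k) μ.wt term,
        prod_split _ hpk' μ.wt term]
      obtain ⟨d, hd⟩ : ∃ d, (μ.wt k).2.2 = ((ht μ p).toNat + 1) + d :=
        ⟨(μ.wt k).2.2 - ((ht μ p).toNat + 1), by omega⟩
      rw [hd]
      conv_rhs => rw [hwtp, hwtk, hd]
      have key : yv ^ 2 * qv * (term (0, 0, (ht μ p).toNat + 1 + d - ((ht μ p).toNat + 1)) *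
            term (1, 1, (μ.wt p).2.2 + (ht μ p).toNat)) =
          term (1, 1, (ht μ p).toNat + 1 + d) * term (2, 0, (μ.wt p).2.2) := by
        simp only [term, Nat.add_sub_cancel_left]
        ring
      set P := ∏ j ∈ (Finset.univ \ {k}) \ {p}, term (μ.wt j)
      linear_combination P * key
    · left
      rcases violU_facts hMs hU hm hne with ⟨hwtp, -⟩ | ⟨hwtp, hcp1, hcp2, hwtk, hck⟩
      · rw [hwtp] at h0; simp at h0
      have hw := congrArg WPath.wt (toggle_U1 hU h0)
      rw [partner_eq hm] at hw
      rw [rho_def, rho_def, hw, prod_comp_update Finset.univ (Finset.mem_univ k),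
        prod_comp_update _ hpk',
        prod_split Finset.univ (Finset.mem_univ k) μ.wt term,
        prod_split _ hpk' μ.wt term]
      obtain ⟨d, hd⟩ : ∃ d, (μ.wt p).2.2 = (ht μ p).toNat + d :=
        ⟨(μ.wt p).2.2 - (ht μ p).toNat, by omega⟩
      rw [hd]
      conv_rhs => rw [hwtp, hwtk, hd]
      have key : term (1, 1, (μ.wt k).2.2 + ((ht μ p).toNat + 1)) *
            term (2, 0, (ht μ p).toNat + d - (ht μ p).toNat) =
          yv ^ 2 * qv * (term (0, 0, (μ.wt k).2.2) * term (1, 1, (ht μ p).toNat + d)) := by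
        simp only [term, Nat.add_sub_cancel_left]
        ring
      set P := ∏ j ∈ (Finset.univ \ {k}) \ {p}, term (μ.wt j)
      linear_combination P * key

lemma tExp_toggle {μ : WPath n} {p : Fin n} (hMs : Mstar μ) (hv : viol μ p) :
    tExp (toggle μ p) = tExp μ := by
  rcases hv with ⟨hL, h0⟩ | ⟨hW, h0⟩ | ⟨hU, k, hm, hne⟩
  · have hw := congrArg WPath.wt (toggle_L hL)
    rw [tExp_def, tExp_def, hw,
      sum_comp_update Finset.univ (Finset.mem_univ p) _ _ (fun w => w.2.1),
      sum_split Finset.univ (Finset.mem_univ p) μ.wt (fun w => w.2.1), h0]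
  · have hw := congrArg WPath.wt (toggle_W hW)
    rw [tExp_def, tExp_def, hw,
      sum_comp_update Finset.univ (Finset.mem_univ p) _ _ (fun w => w.2.1),
      sum_split Finset.univ (Finset.mem_univ p) μ.wt (fun w => w.2.1), h0]
  · have hpk := hpk_of_matching hm
    have hpk' : p ∈ Finset.univ \ ({k} : Finset (Fin n)) := by
      simp [Finset.mem_sdiff, hpk]
    by_cases h0 : (μ.wt p).2.1 = 0
    · rcases violU_facts hMs hU hm hne with ⟨hwtp, -, hwtk, -, -⟩ | ⟨hwtp, -⟩
      swap
      · rw [hwtp] at h0; simp at h0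
      have hw := congrArg WPath.wt (toggle_U0 hU h0)
      rw [partner_eq hm] at hw
      rw [tExp_def, tExp_def, hw,
        sum_comp_update Finset.univ (Finset.mem_univ k) _ _ (fun w => w.2.1),
        sum_comp_update _ hpk' _ _ (fun w => w.2.1),
        sum_split Finset.univ (Finset.mem_univ k) μ.wt (fun w => w.2.1),
        sum_split _ hpk' μ.wt (fun w => w.2.1)]
      rw [h0]
      conv_rhs => rw [hwtk]
      dsimp only
      omega
    · rcases violU_facts hMs hU hm hne with ⟨hwtp, -⟩ | ⟨hwtp, -, -, hwtk, -⟩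
      · rw [hwtp] at h0; simp at h0
      have hw := congrArg WPath.wt (toggle_U1 hU h0)
      rw [partner_eq hm] at hw
      rw [tExp_def, tExp_def, hw,
        sum_comp_update Finset.univ (Finset.mem_univ k) _ _ (fun w => w.2.1),
        sum_comp_update _ hpk' _ _ (fun w => w.2.1),
        sum_split Finset.univ (Finset.mem_univ k) μ.wt (fun w => w.2.1),
        sum_split _ hpk' μ.wt (fun w => w.2.1)]
      conv_rhs => rw [hwtp, hwtk]
      dsimp only
      omega

end Aux7
section Aux8
open scoped Classical

variable {n : ℕ}

lemma gextra_iff {μ : WPath n} (hMs : Mstar μ) :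
    GextraCond μ ↔ ∀ x : Fin n, ¬viol μ x := by
  constructor
  · rintro ⟨hG1, hG2, hG3⟩ x
    rintro (⟨hL, h0⟩ | ⟨hW, h0⟩ | ⟨hU, k, hk, hne⟩)
    · have h1 := (hG2 x hL).2.1
      omega
    · have h1 := (hG3 x hW).2.2.1
      omega
    · rcases hG1 x k hk with ⟨h1, h2⟩ | ⟨h1, h2⟩
      · exact hne (h1.2.1.trans h2.2.1.symm)
      · exact hne (h1.2.1.trans h2.2.1.symm)
  · intro hnv
    refine ⟨?_, ?_, ?_⟩
    · intro i j hij
      have hU := hij.2.1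
      have hD := hij.2.2.1
      have hhj : ht μ j = ht μ i + 1 := hij.2.2.2.1
      have heq : (μ.wt i).2.1 = (μ.wt j).2.1 := by
        by_contra hne
        exact hnv i (Or.inr (Or.inr ⟨hU, j, hij, hne⟩))
      rcases (hMs.1.2 i).1 hU with h | h
      · left
        have ht0 : (μ.wt j).2.1 = 0 := by rw [← heq, h.2.1]
        rcases (hMs.1.2 j).2.2.2 hD with hq | hq
        · obtain ⟨q1, q2, q3, q4⟩ := hq
          rw [hhj] at q4
          exact ⟨h, q1, q2, q3, by omega⟩
        · have := hq.2.1
          omega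
      · right
        have ht1 : (μ.wt j).2.1 = 1 := by rw [← heq, h.2.1]
        rcases (hMs.1.2 j).2.2.2 hD with hq | hq
        · have := hq.2.1
          omega
        · obtain ⟨q1, q2, q3, q4⟩ := hq
          rw [hhj] at q3 q4
          exact ⟨h, q1, q2, by omega, by omega⟩
    · intro j hL
      have h1 : ¬(μ.wt j).2.1 = 0 := fun h0 => hnv j (Or.inl ⟨hL, h0⟩)
      rcases (hMs.1.2 j).2.1 hL with h | h
      · exact absurd h.2.1 h1
      · exact h
    · intro j hW
      obtain ⟨hh1, h⟩ := (hMs.1.2 j).2.2.1 hW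
      have h1 : ¬(μ.wt j).2.1 = 0 := fun h0 => hnv j (Or.inr (Or.inl ⟨hW, h0⟩))
      rcases h with h | h
      · exact absurd h.2.1 h1
      · exact ⟨hh1, h⟩

noncomputable def dpartner (μ : WPath n) (j : Fin n) : Fin n :=
  if h : ∃ i, Matching μ i j then h.choose else j

lemma dpartner_spec {μ : WPath n} {j : Fin n} (h : ∃ i, Matching μ i j) :
    Matching μ (dpartner μ j) j := by
  rw [dpartner, dif_pos h]; exact h.choose_spec

lemma parity_lemma {μ : WPath n} (hMs : Mstar μ) (hG : GextraCond μ) :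
    tExp μ ≡ n [MOD 2] := by
  classical
  set g : Fin n → ℕ := fun x => (μ.wt x).2.1 + 1 with hg
  set A : Finset (Fin n) := Finset.univ.filter (fun x => μ.step x = MStep.U) with hA
  set B : Finset (Fin n) := Finset.univ.filter (fun x => μ.step x = MStep.D) with hB
  set C : Finset (Fin n) := Finset.univ.filter (fun x => μ.step x = MStep.L) with hC
  set E : Finset (Fin n) := Finset.univ.filter (fun x => μ.step x = MStep.W) with hE
  have hdisj : ∀ s t : MStep, s ≠ t →
      Disjoint (Finset.univ.filter (fun x => μ.step x = s))
        (Finset.univ.filter (fun x => μ.step x = t)) := by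
    intro s t hst
    rw [Finset.disjoint_left]
    intro x hx hy
    simp only [Finset.mem_filter] at hx hy
    exact hst (hx.2.symm.trans hy.2)
  have hunion : A ∪ B ∪ C ∪ E = Finset.univ := by
    ext x
    simp only [hA, hB, hC, hE, Finset.mem_union, Finset.mem_filter, Finset.mem_univ,
      true_and, iff_true]
    cases μ.step x <;> simp
  have hd1 : Disjoint A B := hdisj _ _ (by decide)
  have hd2 : Disjoint (A ∪ B) C := by
    rw [Finset.disjoint_union_left]
    exact ⟨hdisj _ _ (by decide), hdisj _ _ (by decide)⟩
  have hd3 : Disjoint (A ∪ B ∪ C) E := by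
    rw [Finset.disjoint_union_left, Finset.disjoint_union_left]
    exact ⟨⟨hdisj _ _ (by decide), hdisj _ _ (by decide)⟩, hdisj _ _ (by decide)⟩
  have hsum : ∑ x, g x = ∑ x ∈ A, g x + ∑ x ∈ B, g x + ∑ x ∈ C, g x + ∑ x ∈ E, g x := by
    rw [← hunion, Finset.sum_union hd3, Finset.sum_union hd2, Finset.sum_union hd1]
  have hAB : ∑ x ∈ A, g x = ∑ x ∈ B, g x := by
    refine Finset.sum_nbij' (partner μ) (dpartner μ) ?_ ?_ ?_ ?_ ?_
    · intro a ha
      simp only [hA, Finset.mem_filter, Finset.mem_univ, true_and] at ha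
      have hm := partner_spec (exists_matching_right μ hMs.1.1 a ha)
      simp only [hB, Finset.mem_filter, Finset.mem_univ, true_and]
      exact hm.2.2.1
    · intro b hb
      simp only [hB, Finset.mem_filter, Finset.mem_univ, true_and] at hb
      have hm := dpartner_spec (exists_matching_left μ hMs.1.1 b hb)
      simp only [hA, Finset.mem_filter, Finset.mem_univ, true_and]
      exact hm.2.1
    · intro a ha
      simp only [hA, Finset.mem_filter, Finset.mem_univ, true_and] at ha
      have hm := partner_spec (exists_matching_right μ hMs.1.1 a ha)
      have hm2 := dpartner_spec ⟨a, hm⟩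
      exact matching_unique_left hm2 hm
    · intro b hb
      simp only [hB, Finset.mem_filter, Finset.mem_univ, true_and] at hb
      have hm := dpartner_spec (exists_matching_left μ hMs.1.1 b hb)
      have hm2 := partner_spec ⟨b, hm⟩
      exact matching_unique_right hm2 hm
    · intro a ha
      simp only [hA, Finset.mem_filter, Finset.mem_univ, true_and] at ha
      have hm := partner_spec (exists_matching_right μ hMs.1.1 a ha)
      rcases hG.1 a (partner μ a) hm with ⟨h1, h2⟩ | ⟨h1, h2⟩ <;>
        simp [hg, h1.2.1, h2.2.1]
  have hCg : ∑ x ∈ C, g x = 2 * C.card := by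
    rw [Finset.sum_congr rfl fun x hx => ?_, Finset.sum_const, smul_eq_mul, mul_comm]
    simp only [hC, Finset.mem_filter, Finset.mem_univ, true_and] at hx
    simp [hg, (hG.2.1 x hx).2.1]
  have hEg : ∑ x ∈ E, g x = 2 * E.card := by
    rw [Finset.sum_congr rfl fun x hx => ?_, Finset.sum_const, smul_eq_mul, mul_comm]
    simp only [hE, Finset.mem_filter, Finset.mem_univ, true_and] at hx
    simp [hg, ((hG.2.2 x hx).2).2.1]
  have htn : tExp μ + n = ∑ x, g x := by
    rw [tExp_def, hg]
    rw [Finset.sum_add_distrib]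
    simp
  show tExp μ % 2 = n % 2
  omega
end Aux8
section Aux9
open scoped Classical

variable {n : ℕ}

noncomputable def violSet (μ : WPath n) : Finset (Fin n) :=
  Finset.univ.filter (viol μ)

lemma mem_violSet {μ : WPath n} {x : Fin n} : x ∈ violSet μ ↔ viol μ x := by
  simp [violSet]

noncomputable def psi (μ : WPath n) : WPath n :=
  if h : (violSet μ).Nonempty then toggle μ ((violSet μ).min' h) else μ

lemma violSet_toggle {μ : WPath n} {p : Fin n} (hMs : Mstar μ) (hv : viol μ p) :
    violSet (toggle μ p) = violSet μ := by
  ext x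
  simp only [mem_violSet]
  exact viol_toggle hMs hv x

end Aux9
/-- Proposition 4.5 (with the observations in the proof of Theorem 1.4(ii)):
there is an involution `Ψ` of `M*_n` whose fixed points are exactly the paths of
`G_n`, which changes the weight of a non-fixed path by a factor `y²q` or
`y^{-2}q^{-1}`, and which preserves the exponent of `t` of the weight; moreover
the exponent of `t` of the weight of every path of `G_n` is congruent to `n`
modulo 2. -/
theorem statement17 (n : ℕ) :
    ∃ Ψ : WPath n → WPath n,
      (∀ μ : WPath n, Mstar μ → Mstar (Ψ μ)) ∧
      (∀ μ : WPath n, Mstar μ → Ψ (Ψ μ) = μ) ∧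
      (∀ μ : WPath n, Mstar μ → (Ψ μ = μ ↔ GextraCond μ)) ∧
      (∀ μ : WPath n, Mstar μ → ¬ GextraCond μ →
        rho (Ψ μ) = yv ^ 2 * qv * rho μ ∨ yv ^ 2 * qv * rho (Ψ μ) = rho μ) ∧
      (∀ μ : WPath n, Mstar μ → tExp (Ψ μ) = tExp μ) ∧
      (∀ μ : WPath n, Mstar μ → GextraCond μ → tExp μ ≡ n [MOD 2]) := by
  classical
  refine ⟨psi, ?_, ?_, ?_, ?_, ?_, ?_⟩
  · intro μ hMs
    unfold psi
    split_ifs with h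
    · exact mstar_toggle hMs (mem_violSet.mp ((violSet μ).min'_mem h))
    · exact hMs
  · intro μ hMs
    by_cases h : (violSet μ).Nonempty
    · have hp : viol μ ((violSet μ).min' h) := mem_violSet.mp ((violSet μ).min'_mem h)
      have h1 : psi μ = toggle μ ((violSet μ).min' h) := dif_pos h
      rw [h1]
      have hnu : (violSet (toggle μ ((violSet μ).min' h))).Nonempty := by
        rw [violSet_toggle hMs hp]; exact h
      have h2 : psi (toggle μ ((violSet μ).min' h)) =
          toggle (toggle μ ((violSet μ).min' h))
            ((violSet (toggle μ ((violSet μ).min' h))).min' hnu) := dif_pos hnu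
      have h3 : (violSet (toggle μ ((violSet μ).min' h))).min' hnu =
          (violSet μ).min' h := by
        simp only [violSet_toggle hMs hp]
      rw [h2, h3]
      exact toggle_toggle hMs hp
    · have h1 : psi μ = μ := dif_neg h
      rw [h1, h1]
  · intro μ hMs
    by_cases h : (violSet μ).Nonempty
    · have hp : viol μ ((violSet μ).min' h) := mem_violSet.mp ((violSet μ).min'_mem h)
      have h1 : psi μ = toggle μ ((violSet μ).min' h) := dif_pos h
      rw [h1]
      exact iff_of_false (toggle_ne hMs hp)
        (fun hG => (gextra_iff hMs).mp hG _ hp)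
    · refine iff_of_true (dif_neg h) ?_
      rw [gextra_iff hMs]
      intro x hv
      exact h ⟨x, mem_violSet.mpr hv⟩
  · intro μ hMs hG
    have h : (violSet μ).Nonempty := by
      by_contra hne
      apply hG
      rw [gextra_iff hMs]
      intro x hv
      exact hne ⟨x, mem_violSet.mpr hv⟩
    have h1 : psi μ = toggle μ ((violSet μ).min' h) := dif_pos h
    rw [h1]
    exact rho_toggle hMs (mem_violSet.mp ((violSet μ).min'_mem h))
  · intro μ hMs
    unfold psi
    split_ifs with h
    · exact tExp_toggle hMs (mem_violSet.mp ((violSet μ).min'_mem h))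
    · rfl
  · intro μ hMs hG
    exact parity_lemma hMs hG
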